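/- Let K ≥ 1 and n ≥ 1, and let 0 < λ_1 ≤ λ_2 ≤ … ≤ λ_K. For each type k let P_1^k, …, P_n^k be mutually independent random variables, with P_i^k exponentially distributed with mean λ_k. With C_OPT = Σ_j P_j + Σ_{1≤i<j≤N} min(P_i, P_j) over all N = nK jobs, one has E[C_OPT] ≥ (n²/4)·Σ_{ℓ=1}^K λ_ℓ. -/

import Mathlib

open MeasureTheory ProbabilityTheory Finset Real Set

section aux
variable {Ω : Type*} [MeasurableSpace Ω] (μ : Measure Ω) [IsProbabilityMeasure μ]

lemma expMeasure_Ioi {r t : ℝ} (hr : 0 < r) (ht : 0 ≤ t) :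
    expMeasure r (Set.Ioi t) = ENNReal.ofReal (Real.exp (-(r * t))) := by
  have hP := isProbabilityMeasure_expMeasure hr
  have hIic : expMeasure r (Set.Iic t) = ENNReal.ofReal (1 - Real.exp (-(r * t))) := by
    rw [expMeasure, gammaMeasure, withDensity_apply _ measurableSet_Iic]
    have := lintegral_exponentialPDF_eq_antiDeriv hr t
    rw [if_pos ht] at this
    exact this
  have h1 : expMeasure r (Set.Iic t) + expMeasure r (Set.Ioi t) = 1 := by
    rw [← measure_union (by simp [Set.disjoint_left]) measurableSet_Ioi, Set.Iic_union_Ioi,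
      measure_univ]
  have he : Real.exp (-(r * t)) ≤ 1 := Real.exp_le_one_iff.2 (by nlinarith)
  rw [hIic] at h1
  have : ENNReal.ofReal (1 - Real.exp (-(r * t))) + ENNReal.ofReal (Real.exp (-(r * t))) = 1 := by
    rw [← ENNReal.ofReal_add (by linarith) (Real.exp_nonneg _)]
    norm_num
  rw [← this] at h1
  exact (ENNReal.add_right_inj (by simp)).1 h1

lemma exp_tail_integral {X : Ω → ℝ} (hm : Measurable X) (hnn : 0 ≤ᵐ[μ] X) {r : ℝ} (hr : 0 < r)
    (htail : ∀ t : ℝ, 0 < t → μ {ω | t < X ω} = ENNReal.ofReal (Real.exp (-(r * t)))) :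
    Integrable X μ ∧ ∫ ω, X ω ∂μ = 1 / r := by
  have hlint : ∫⁻ ω, ENNReal.ofReal (X ω) ∂μ = ENNReal.ofReal (1 / r) := by
    rw [MeasureTheory.lintegral_eq_lintegral_meas_lt μ hnn hm.aemeasurable,
      setLIntegral_congr_fun measurableSet_Ioi (fun t ht => htail t ht),
      ← ofReal_integral_eq_lintegral_ofReal]
    · congr 1
      have h := integral_comp_mul_left_Ioi (fun x => Real.exp (-x)) 0 hr
      rw [mul_zero] at h
      rw [h, integral_exp_neg_Ioi_zero]
      simp [one_div]
    · simpa [neg_mul, IntegrableOn] using exp_neg_integrableOn_Ioi 0 hr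
    · exact ae_of_all _ fun t => Real.exp_nonneg _
  have hint : Integrable X μ := by
    refine ⟨hm.aestronglyMeasurable, ?_⟩
    rw [hasFiniteIntegral_iff_norm]
    have : ∫⁻ a, ENNReal.ofReal ‖X a‖ ∂μ = ∫⁻ a, ENNReal.ofReal (X a) ∂μ := by
      refine lintegral_congr_ae ?_
      filter_upwards [hnn] with a ha
      rw [Real.norm_of_nonneg ha]
    rw [this, hlint]
    exact ENNReal.ofReal_lt_top
  refine ⟨hint, ?_⟩
  rw [integral_eq_lintegral_of_nonneg_ae hnn hm.aestronglyMeasurable, hlint,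
    ENNReal.toReal_ofReal (by positivity)]

lemma dist_nonneg_tail {X : Ω → ℝ} (hm : Measurable X) {r : ℝ} (hr : 0 < r)
    (hd : μ.map X = expMeasure r) :
    (0 ≤ᵐ[μ] X) ∧ ∀ t : ℝ, 0 ≤ t → μ {ω | t < X ω} = ENNReal.ofReal (Real.exp (-(r * t))) := by
  constructor
  · have : μ {ω | X ω < 0} = 0 := by
      have : μ (X ⁻¹' Set.Iio 0) = (μ.map X) (Set.Iio 0) := (Measure.map_apply hm measurableSet_Iio).symm
      rw [Set.preimage] at this
      simp only [Set.mem_Iio] at this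
      rw [this, hd, expMeasure, gammaMeasure, withDensity_apply _ measurableSet_Iio]
      exact lintegral_exponentialPDF_of_nonpos le_rfl
    filter_upwards [measure_eq_zero_iff_ae_notMem.1 this] with ω hω
    simpa using hω
  · intro t ht
    have : μ (X ⁻¹' Set.Ioi t) = (μ.map X) (Set.Ioi t) := (Measure.map_apply hm measurableSet_Ioi).symm
    rw [Set.preimage] at this
    simp only [Set.mem_Ioi] at this
    rw [this, hd, expMeasure_Ioi hr ht]

lemma min_exp_integral {X Y : Ω → ℝ} (hmX : Measurable X) (hmY : Measurable Y)
    {a b : ℝ} (ha : 0 < a) (hb : 0 < b)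
    (hdX : μ.map X = expMeasure a) (hdY : μ.map Y = expMeasure b)
    (hXY : IndepFun X Y μ) :
    Integrable (fun ω => min (X ω) (Y ω)) μ ∧
      ∫ ω, min (X ω) (Y ω) ∂μ = 1 / (a + b) := by
  obtain ⟨hnnX, htX⟩ := dist_nonneg_tail μ hmX ha hdX
  obtain ⟨hnnY, htY⟩ := dist_nonneg_tail μ hmY hb hdY
  have hnn : 0 ≤ᵐ[μ] fun ω => min (X ω) (Y ω) := by
    filter_upwards [hnnX, hnnY] with ω h1 h2
    exact le_min h1 h2
  refine exp_tail_integral μ (hmX.min hmY) hnn (by positivity) ?_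
  intro t ht
  have hset : {ω | t < min (X ω) (Y ω)} = X ⁻¹' Set.Ioi t ∩ Y ⁻¹' Set.Ioi t := by
    ext ω; simp [lt_min_iff, Set.mem_Ioi]
  rw [hset, hXY.measure_inter_preimage_eq_mul _ _ measurableSet_Ioi measurableSet_Ioi]
  have h1 : μ (X ⁻¹' Set.Ioi t) = ENNReal.ofReal (Real.exp (-(a * t))) := htX t ht.le
  have h2 : μ (Y ⁻¹' Set.Ioi t) = ENNReal.ofReal (Real.exp (-(b * t))) := htY t ht.le
  rw [h1, h2, ← ENNReal.ofReal_mul (Real.exp_nonneg _), ← Real.exp_add]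
  ring_nf

lemma two_mul_sum_Ioi {N : ℕ} (f : Fin N → Fin N → ℝ) (hsymm : ∀ i j, f i j = f j i) :
    2 * ∑ i : Fin N, ∑ j ∈ Finset.Ioi i, f i j =
      (∑ i : Fin N, ∑ j : Fin N, f i j) - ∑ i : Fin N, f i i := by
  have hdecomp : ∀ i : Fin N, ∑ j : Fin N, f i j =
      f i i + ∑ j ∈ Finset.Iio i, f i j + ∑ j ∈ Finset.Ioi i, f i j := by
    intro i
    have huniv : (Finset.univ : Finset (Fin N)) =
        insert i (Finset.Iio i ∪ Finset.Ioi i) := by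
      ext j
      simp only [Finset.mem_univ, Finset.mem_insert, Finset.mem_union, Finset.mem_Iio,
        Finset.mem_Ioi, true_iff]
      rcases lt_trichotomy j i with h | h | h
      · exact Or.inr (Or.inl h)
      · exact Or.inl h
      · exact Or.inr (Or.inr h)
    rw [huniv, Finset.sum_insert (by simp), Finset.sum_union (by
      simp [Finset.disjoint_left]
      intro a ha; exact le_of_lt ha)]
    ring
  have hswap : ∑ i : Fin N, ∑ j ∈ Finset.Iio i, f i j =
      ∑ i : Fin N, ∑ j ∈ Finset.Ioi i, f i j := by
    rw [Finset.sum_comm' (s := Finset.univ) (t := fun x => Finset.Iio x)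
      (t' := Finset.univ) (s' := fun y => Finset.Ioi y) (by
        intro x y
        simp only [Finset.mem_univ, Finset.mem_Iio, Finset.mem_Ioi, true_and, and_true])]
    exact Finset.sum_congr rfl fun j _ => Finset.sum_congr rfl fun i _ => hsymm i j
  rw [Finset.sum_congr rfl fun i _ => hdecomp i]
  rw [Finset.sum_add_distrib, Finset.sum_add_distrib, hswap]
  ring

end aux

/-- Lower bound on the optimal expected flow time:
`E[C_OPT] ≥ (n²/4) * Σ_ℓ λ_ℓ`. -/
theorem stmt_19
    {Ω : Type*} [MeasurableSpace Ω] (μ : Measure Ω) [IsProbabilityMeasure μ]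
    (K n : ℕ) (hK : 1 ≤ K) (hn : 1 ≤ n)
    (lam : Fin K → ℝ) (hpos : ∀ k, 0 < lam k) (hmono : Monotone lam)
    (P : Fin K → Fin n → Ω → ℝ)
    (hmeas : ∀ k i, Measurable (P k i))
    (hdist : ∀ k i, Measure.map (P k i) μ = expMeasure (1 / lam k))
    (hindep : iIndepFun
      (fun p : Fin K × Fin n => P p.1 p.2) μ)
    (e : Fin (n * K) ≃ Fin K × Fin n)
    (COPT : Ω → ℝ)
    (hCOPT : ∀ ω, COPT ω =
      (∑ j : Fin (n * K), P (e j).1 (e j).2 ω) +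
      ∑ i : Fin (n * K), ∑ j ∈ Finset.Ioi i,
        min (P (e i).1 (e i).2 ω) (P (e j).1 (e j).2 ω)) :
    ∫ ω, COPT ω ∂μ ≥ (n : ℝ) ^ 2 / 4 * ∑ l, lam l := by
  have hrpos : ∀ k : Fin K, 0 < 1 / lam k := fun k => by
    have := hpos k; positivity
  -- per job integrability and expectation
  have hjob : ∀ p : Fin K × Fin n,
      Integrable (P p.1 p.2) μ ∧ ∫ ω, P p.1 p.2 ω ∂μ = lam p.1 := by
    intro p
    obtain ⟨hnn, ht⟩ := dist_nonneg_tail μ (hmeas p.1 p.2) (hrpos p.1) (hdist p.1 p.2)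
    have h := exp_tail_integral μ (hmeas p.1 p.2) hnn (hrpos p.1) (fun t ht' => ht t ht'.le)
    rwa [one_div_one_div] at h
  -- per pair integrability and expectation
  have hpair : ∀ p q : Fin K × Fin n, p ≠ q →
      Integrable (fun ω => min (P p.1 p.2 ω) (P q.1 q.2 ω)) μ ∧
      ∫ ω, min (P p.1 p.2 ω) (P q.1 q.2 ω) ∂μ = 1 / (1 / lam p.1 + 1 / lam q.1) :=
    fun p q hpq => min_exp_integral μ (hmeas _ _) (hmeas _ _) (hrpos p.1) (hrpos q.1)
      (hdist _ _) (hdist _ _) (hindep.indepFun hpq)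
  set m : Fin K × Fin n → Fin K × Fin n → ℝ :=
    fun p q => ∫ ω, min (P p.1 p.2 ω) (P q.1 q.2 ω) ∂μ with hm
  set F : Fin K × Fin n → Fin K × Fin n → ℝ :=
    fun p q => if p.1 = q.1 then lam p.1 / 2 else 0 with hF
  have hFsymm : ∀ p q, F p q = F q p := by
    intro p q
    simp only [hF]
    by_cases h : p.1 = q.1
    · rw [if_pos h, if_pos h.symm, h]
    · rw [if_neg h, if_neg (fun hh => h hh.symm)]
  have hmF : ∀ p q, p ≠ q → F p q ≤ m p q := by
    intro p q hpq
    simp only [hm, hF]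
    rw [(hpair p q hpq).2]
    by_cases h : p.1 = q.1
    · rw [if_pos h, ← h]
      have hl := hpos p.1
      rw [show (1:ℝ) / lam p.1 + 1 / lam p.1 = 2 / lam p.1 by ring, one_div_div]
    · rw [if_neg h]
      have : 0 < 1 / lam p.1 + 1 / lam q.1 := add_pos (hrpos p.1) (hrpos q.1)
      exact le_of_lt (one_div_pos.2 this)
  have hne : ∀ i j : Fin (n * K), j ∈ Finset.Ioi i → e i ≠ e j :=
    fun i j hj h => (Finset.mem_Ioi.1 hj).ne (e.injective h)
  -- split the integral
  have hA : Integrable (fun ω => ∑ j : Fin (n * K), P (e j).1 (e j).2 ω) μ :=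
    integrable_finset_sum _ (fun j _ => (hjob (e j)).1)
  have hB : Integrable (fun ω => ∑ i : Fin (n * K), ∑ j ∈ Finset.Ioi i,
      min (P (e i).1 (e i).2 ω) (P (e j).1 (e j).2 ω)) μ :=
    integrable_finset_sum _ (fun i _ => integrable_finset_sum _
      (fun j hj => (hpair (e i) (e j) (hne i j hj)).1))
  have hsplit : ∫ ω, COPT ω ∂μ =
      (∑ j : Fin (n * K), lam ((e j).1)) +
      ∑ i : Fin (n * K), ∑ j ∈ Finset.Ioi i, m (e i) (e j) := by
    have h0 : ∫ ω, COPT ω ∂μ = ∫ ω, ((∑ j : Fin (n * K), P (e j).1 (e j).2 ω) +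
        ∑ i : Fin (n * K), ∑ j ∈ Finset.Ioi i,
          min (P (e i).1 (e i).2 ω) (P (e j).1 (e j).2 ω)) ∂μ :=
      integral_congr_ae (ae_of_all _ hCOPT)
    rw [h0, integral_add hA hB, integral_finset_sum _ (fun j _ => (hjob (e j)).1),
      integral_finset_sum _ (fun i _ => integrable_finset_sum _
        (fun j hj => (hpair (e i) (e j) (hne i j hj)).1))]
    congr 1
    · exact Finset.sum_congr rfl fun j _ => (hjob (e j)).2
    · refine Finset.sum_congr rfl fun i _ => ?_
      exact integral_finset_sum _ (fun j hj => (hpair (e i) (e j) (hne i j hj)).1)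
  -- sums of lam
  have hSl : 0 ≤ ∑ l, lam l := Finset.sum_nonneg fun l _ => (hpos l).le
  have hA' : (∑ j : Fin (n * K), lam ((e j).1)) = (n : ℝ) * ∑ l, lam l := by
    rw [Equiv.sum_comp e (fun p => lam p.1), Fintype.sum_prod_type]
    simp [Finset.sum_const, Finset.card_univ, Finset.mul_sum]
  -- lower bound pairs by F and compute the F sum
  have hBF : ∑ i : Fin (n * K), ∑ j ∈ Finset.Ioi i, F (e i) (e j) ≤
      ∑ i : Fin (n * K), ∑ j ∈ Finset.Ioi i, m (e i) (e j) :=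
    Finset.sum_le_sum fun i _ => Finset.sum_le_sum fun j hj =>
      hmF (e i) (e j) (hne i j hj)
  have htot : ∑ i : Fin (n * K), ∑ j : Fin (n * K), F (e i) (e j) =
      (n : ℝ) ^ 2 / 2 * ∑ l, lam l := by
    have h1 : ∀ i, ∑ j : Fin (n * K), F (e i) (e j) = ∑ q, F (e i) q :=
      fun i => Equiv.sum_comp e (F (e i))
    rw [Finset.sum_congr rfl fun i _ => h1 i, Equiv.sum_comp e (fun p => ∑ q, F p q)]
    simp only [hF, Fintype.sum_prod_type]
    have hin : ∀ k : Fin K, (∑ l : Fin K, ∑ j : Fin n, if k = l then lam k / 2 else 0)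
        = (n : ℝ) * (lam k / 2) := by
      intro k
      simp [Finset.sum_ite_eq, Finset.sum_const, Finset.card_univ]
    rw [Finset.sum_congr rfl fun k _ => Finset.sum_congr rfl fun i (_ : i ∈ Finset.univ) => hin k]
    simp [Finset.sum_const, Finset.card_univ, Finset.mul_sum]
    ring_nf
  have hdiag : ∑ i : Fin (n * K), F (e i) (e i) = (n : ℝ) / 2 * ∑ l, lam l := by
    rw [Equiv.sum_comp e (fun p => F p p)]
    simp only [hF, if_pos rfl, Fintype.sum_prod_type]
    simp [Finset.sum_const, Finset.card_univ, Finset.mul_sum]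
    ring_nf
  have h2 := two_mul_sum_Ioi (fun i j => F (e i) (e j)) (fun i j => hFsymm (e i) (e j))
  have hn1 : (1 : ℝ) ≤ (n : ℝ) := by exact_mod_cast hn
  rw [hsplit, hA']
  nlinarith [hBF, h2, htot, hdiag, mul_nonneg (mul_nonneg (le_trans zero_le_one hn1) (le_trans zero_le_one hn1)) hSl]
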